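/- Give S = K[x,y] the standard grading (a = b = 1, r = x/y) and let M be a monomial ideal of finite colength with T⁻(M) = ∅, so that its minimal generators are m_k = x^{a_k} y^k for 0 ≤ k ≤ e. Fix k ≥ 0 such that m_k r ∈ S ∖ M. If 0 < ℓ ≤ k and m_k r^ℓ ∈ S ∖ M, then there exists a direct path from m_k of length ℓ. -/

import Mathlib

/-!
Combinatorial framework for monomial ideals in `K[x,y]`, graded by
`deg x = a`, `deg y = b`.  A monomial `x^α y^β` is represented by the
pair `(α, β) : ℤ × ℤ`; it lies in `S = K[x,y]` when both entries are
nonnegative.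
-/

namespace MonId

/-- A (Laurent) monomial `x^α y^β`, represented by its exponent vector. -/
abbrev Mon : Type := ℤ × ℤ

/-- `p` is a genuine monomial of `S = K[x,y]` (nonnegative exponents). -/
def inS (p : Mon) : Prop := 0 ≤ p.1 ∧ 0 ≤ p.2

/-- `M` is (the set of monomials of) a monomial ideal of `S` of finite
colength: it consists of monomials of `S`, is closed under multiplication
by `x` and by `y`, and its complement in the monomials of `S` is finite. -/
def IsMonIdeal (M : Set Mon) : Prop :=
  (∀ p ∈ M, inS p) ∧
  (∀ p ∈ M, (p.1 + 1, p.2) ∈ M ∧ (p.1, p.2 + 1) ∈ M) ∧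
  {p : Mon | inS p ∧ p ∉ M}.Finite

/-- `p` is a minimal monomial generator of the monomial ideal `M`. -/
def IsMinGen (M : Set Mon) (p : Mon) : Prop :=
  p ∈ M ∧ (p.1 - 1, p.2) ∉ M ∧ (p.1, p.2 - 1) ∉ M

/-- `m 0, m 1, …, m e` is the list of minimal generators of `M`, in
increasing lexicographic order `≺` with `x ≺ y` (equivalently, with
strictly increasing `y`-exponents). -/
def IsGenSeq (M : Set Mon) (e : ℕ) (m : ℕ → Mon) : Prop :=
  (∀ k ≤ e, IsMinGen M (m k)) ∧
  (∀ k, k < e → (m k).2 < (m (k + 1)).2) ∧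
  (∀ p, IsMinGen M p → ∃ k ≤ e, m k = p)

/-- Multiplication of the monomial `p` by `r^ℓ`, where `r = x^b y^{-a}`. -/
def rpow (a b ℓ : ℤ) (p : Mon) : Mon := (p.1 + b * ℓ, p.2 - a * ℓ)

/-- `w m i` is `w_i = lcm(m_{i-1}, m_i)` (componentwise max of exponents). -/
def w (m : ℕ → Mon) (i : ℕ) : Mon :=
  (max (m (i - 1)).1 (m i).1, max (m (i - 1)).2 (m i).2)

/-- The set `T⁺(M)` of positive significant arrows `(i, ℓ)`:
`1 ≤ i ≤ e`, `ℓ ≥ 1`, `m_i r^ℓ ∈ S ∖ M` and `w_i r^ℓ ∈ M`. -/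
def Tplus (a b : ℤ) (M : Set Mon) (e : ℕ) (m : ℕ → Mon) : Set (ℕ × ℤ) :=
  {q | 1 ≤ q.1 ∧ q.1 ≤ e ∧ 1 ≤ q.2 ∧ inS (rpow a b q.2 (m q.1)) ∧
    rpow a b q.2 (m q.1) ∉ M ∧ rpow a b q.2 (w m q.1) ∈ M}

/-- The set `T⁻(M)` of negative significant arrows `(i, ℓ)`:
`0 ≤ i ≤ e - 1`, `ℓ ≤ -1`, `m_i r^ℓ ∈ S ∖ M` and `w_{i+1} r^ℓ ∈ M`. -/
def Tminus (a b : ℤ) (M : Set Mon) (e : ℕ) (m : ℕ → Mon) : Set (ℕ × ℤ) :=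
  {q | q.1 < e ∧ q.2 ≤ -1 ∧ inS (rpow a b q.2 (m q.1)) ∧
    rpow a b q.2 (m q.1) ∉ M ∧ rpow a b q.2 (w m (q.1 + 1)) ∈ M}

/-- `j⁺(p) = max {i : m_i divides p}`. -/
def jplus (e : ℕ) (m : ℕ → Mon) (p : Mon) : ℕ :=
  Nat.findGreatest (fun i => (m i).1 ≤ p.1 ∧ (m i).2 ≤ p.2) e

/-- `j⁻(p) = min {i : m_i divides p}`. -/
noncomputable def jminus (e : ℕ) (m : ℕ → Mon) (p : Mon) : ℕ :=
  sInf {i | i ≤ e ∧ (m i).1 ≤ p.1 ∧ (m i).2 ≤ p.2}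

/-- `IsPath a b M e m i P`: `P` is a path from the generator `m_i`, i.e. a
finite sequence of positive significant arrows whose first arrow `(i₁, ℓ₁)`
has `i₁ ≤ i`, and whose tail is a path from `m_{j⁺(w_{i₁} r^{ℓ₁})}`.
The empty sequence is a path from every generator. -/
def IsPath (a b : ℤ) (M : Set Mon) (e : ℕ) (m : ℕ → Mon) : ℕ → List (ℕ × ℤ) → Prop
  | _, [] => True
  | i, q :: rest => q ∈ Tplus a b M e m ∧ q.1 ≤ i ∧
      IsPath a b M e m (jplus e m (rpow a b q.2 (w m q.1))) rest

/-- The length `l(P) = ℓ₁ + ⋯ + ℓ_s` of a path. -/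
def llen (P : List (ℕ × ℤ)) : ℤ := (P.map Prod.snd).sum

/-- `lm j` is the largest `ℓ` with `(j, ℓ) ∈ T⁺(M)`, and is `0` when no
such arrow exists. -/
def IsLmax (Tp : Set (ℕ × ℤ)) (lm : ℕ → ℤ) : Prop :=
  ∀ j : ℕ, (∀ ℓ : ℤ, (j, ℓ) ∈ Tp → ℓ ≤ lm j) ∧
    ((∃ ℓ : ℤ, (j, ℓ) ∈ Tp) → (j, lm j) ∈ Tp) ∧
    ((¬ ∃ ℓ : ℤ, (j, ℓ) ∈ Tp) → lm j = 0)

/-- `IsZSeq a b e m lm k L`: `L` is the sequence `(z_1, z_2, …)` of arrows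
produced by the greedy procedure started at index `k`: while `i ≥ 1`, if
`ℓ_i > 0` record the arrow `(i, ℓ_i)` and jump to `j⁺(w_i r^{ℓ_i})`,
otherwise decrease `i` by one; stop when `i ≤ 0`. -/
inductive IsZSeq (a b : ℤ) (e : ℕ) (m : ℕ → Mon) (lm : ℕ → ℤ) : ℕ → List (ℕ × ℤ) → Prop where
  | zero : IsZSeq a b e m lm 0 []
  | skip {i : ℕ} {L : List (ℕ × ℤ)} : 1 ≤ i → lm i ≤ 0 →
      IsZSeq a b e m lm (i - 1) L → IsZSeq a b e m lm i L
  | step {i : ℕ} {L : List (ℕ × ℤ)} : 1 ≤ i → 0 < lm i →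
      IsZSeq a b e m lm (jplus e m (rpow a b (lm i) (w m i))) L →
      IsZSeq a b e m lm i ((i, lm i) :: L)

/-- `D` is a direct path from `m_k`: a path which is either a nonempty
initial segment `(z_1, …, z_s)` of the greedy sequence from `k`, or
`(z_1, …, z_s, (i', ℓ'))` where `i'` is the index of `z_{s+1}` and
`1 ≤ ℓ' < ℓ_{i'}`. -/
def IsDirectPath (a b : ℤ) (M : Set Mon) (e : ℕ) (m : ℕ → Mon) (lm : ℕ → ℤ)
    (k : ℕ) (D : List (ℕ × ℤ)) : Prop :=
  IsPath a b M e m k D ∧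
  ∃ L, IsZSeq a b e m lm k L ∧
    ((∃ s : ℕ, 0 < s ∧ s ≤ L.length ∧ D = L.take s) ∨
     (∃ (s : ℕ) (z : ℕ × ℤ) (ℓ' : ℤ), L[s]? = some z ∧ 1 ≤ ℓ' ∧ ℓ' < z.2 ∧
       D = L.take s ++ [(z.1, ℓ')]))

/-- The monomial `c_P = c_{i₁}^{ℓ₁} ⋯ c_{i_s}^{ℓ_s}` associated to a path,
as an element of the polynomial ring with variables `c_i^ℓ` (indexed by
pairs `(i, ℓ)`). -/
noncomputable def cP (K : Type*) [CommSemiring K] (P : List (ℕ × ℤ)) : MvPolynomial (ℕ × ℤ) K :=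
  (P.map MvPolynomial.X).prod

end MonId

open MonId

section Aux

open MonId

variable {M : Set Mon} {e : ℕ} {m : ℕ → Mon}

lemma addX (hM : IsMonIdeal M) {p : Mon} (hp : p ∈ M) (i : ℕ) :
    ((p.1 + (i : ℤ), p.2) : Mon) ∈ M := by
  induction i with
  | zero => simpa using hp
  | succ n ih =>
      have h := (hM.2.1 _ ih).1
      have he : (((p.1 + (n:ℤ), p.2) : Mon).1 + 1, ((p.1 + (n:ℤ), p.2) : Mon).2)
          = ((p.1 + ((n+1 : ℕ) : ℤ), p.2) : Mon) := by
        simp; push_cast; ring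
      rwa [he] at h

lemma addY (hM : IsMonIdeal M) {p : Mon} (hp : p ∈ M) (j : ℕ) :
    ((p.1, p.2 + (j : ℤ)) : Mon) ∈ M := by
  induction j with
  | zero => simpa using hp
  | succ n ih =>
      have h := (hM.2.1 _ ih).2
      have he : (((p.1, p.2 + (n:ℤ)) : Mon).1, ((p.1, p.2 + (n:ℤ)) : Mon).2 + 1)
          = ((p.1, p.2 + ((n+1 : ℕ) : ℤ)) : Mon) := by
        simp; push_cast; ring
      rwa [he] at h

lemma up (hM : IsMonIdeal M) {p : Mon} (hp : p ∈ M) {u v : ℤ}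
    (h1 : p.1 ≤ u) (h2 : p.2 ≤ v) : ((u, v) : Mon) ∈ M := by
  have h3 := addY hM (addX hM hp (u - p.1).toNat) (v - p.2).toNat
  have he : ((p.1 + ((u - p.1).toNat : ℤ), p.2 + ((v - p.2).toNat : ℤ)) : Mon) = ((u, v) : Mon) := by
    have : ((u - p.1).toNat : ℤ) = u - p.1 := Int.toNat_of_nonneg (by omega)
    have : ((v - p.2).toNat : ℤ) = v - p.2 := Int.toNat_of_nonneg (by omega)
    refine Prod.ext ?_ ?_ <;> simp <;> omega
  rwa [he] at h3

lemma exists_minGen_aux (hM : IsMonIdeal M) :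
    ∀ n : ℕ, ∀ p : Mon, p ∈ M → (p.1 + p.2).toNat = n →
      ∃ q, IsMinGen M q ∧ q.1 ≤ p.1 ∧ q.2 ≤ p.2 := by
  intro n
  induction n using Nat.strong_induction_on with
  | _ n ih =>
    intro p hp hn
    have hpS := hM.1 p hp
    by_cases h1 : ((p.1 - 1, p.2) : Mon) ∈ M
    · have hS := hM.1 _ h1
      simp only [inS] at hS
      obtain ⟨q, hq, a1, a2⟩ := ih ((p.1 - 1) + p.2).toNat (by simp at hS ⊢; omega)
        ((p.1 - 1, p.2) : Mon) h1 rfl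
      exact ⟨q, hq, by simp at a1 ⊢; omega, a2⟩
    · by_cases h2 : ((p.1, p.2 - 1) : Mon) ∈ M
      · have hS := hM.1 _ h2
        simp only [inS] at hS
        obtain ⟨q, hq, a1, a2⟩ := ih (p.1 + (p.2 - 1)).toNat (by simp at hS ⊢; omega)
          ((p.1, p.2 - 1) : Mon) h2 rfl
        exact ⟨q, hq, a1, by simp at a2 ⊢; omega⟩
      · exact ⟨p, ⟨hp, h1, h2⟩, le_refl _, le_refl _⟩

lemma exists_gen (hM : IsMonIdeal M) (hg : IsGenSeq M e m) {p : Mon} (hp : p ∈ M) :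
    ∃ j ≤ e, (m j).1 ≤ p.1 ∧ (m j).2 ≤ p.2 := by
  obtain ⟨q, hq, a1, a2⟩ := exists_minGen_aux hM (p.1 + p.2).toNat p hp rfl
  obtain ⟨j, hj, hje⟩ := hg.2.2 q hq
  exact ⟨j, hj, by rw [hje]; exact a1, by rw [hje]; exact a2⟩

/-- `β` grows at least linearly. -/
lemma beta_ge (hg : IsGenSeq M e m) :
    ∀ d i : ℕ, i + d ≤ e → (m i).2 + (d : ℤ) ≤ (m (i + d)).2 := by
  intro d
  induction d with
  | zero => intro i _; simp
  | succ n ih =>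
      intro i h
      have h1 := ih i (by omega)
      have h2 := hg.2.1 (i + n) (by omega)
      have : i + (n + 1) = (i + n) + 1 := by omega
      rw [this]; push_cast; omega

lemma alpha_step (hM : IsMonIdeal M) (hg : IsGenSeq M e m) :
    ∀ i, i < e → (m (i + 1)).1 < (m i).1 := by
  intro i hi
  by_contra h
  push_neg at h
  have hmin := (hg.1 (i + 1) hi).2.2
  have hlt := hg.2.1 i hi
  exact hmin (up hM (hg.1 i (le_of_lt hi)).1 h (by omega))

/-- `α` decreases at least linearly. -/
lemma alpha_ge (hM : IsMonIdeal M) (hg : IsGenSeq M e m) :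
    ∀ d i : ℕ, i + d ≤ e → (m (i + d)).1 + (d : ℤ) ≤ (m i).1 := by
  intro d
  induction d with
  | zero => intro i _; simp
  | succ n ih =>
      intro i h
      have h1 := ih i (by omega)
      have h2 := alpha_step hM hg (i + n) (by omega)
      have : i + (n + 1) = (i + n) + 1 := by omega
      rw [this]; push_cast; omega

lemma alpha_gap (hM : IsMonIdeal M) (hg : IsGenSeq M e m) {n n' : ℕ}
    (h : n ≤ n') (he' : n' ≤ e) : (m n').1 + ((n' : ℤ) - (n : ℤ)) ≤ (m n).1 := by
  have := alpha_ge hM hg (n' - n) n (by omega)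
  have he : n + (n' - n) = n' := by omega
  rw [he] at this
  have : ((n' - n : ℕ) : ℤ) = (n' : ℤ) - (n : ℤ) := by omega
  omega

lemma alpha_nonneg (hM : IsMonIdeal M) (hg : IsGenSeq M e m) {j : ℕ} (hj : j ≤ e) :
    0 ≤ (m j).1 := (hM.1 _ (hg.1 j hj).1).1

lemma beta_nonneg (hM : IsMonIdeal M) (hg : IsGenSeq M e m) {j : ℕ} (hj : j ≤ e) :
    0 ≤ (m j).2 := (hM.1 _ (hg.1 j hj).1).2

lemma beta_zero (hM : IsMonIdeal M) (hg : IsGenSeq M e m) : (m 0).2 = 0 := by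
  obtain ⟨N, hN⟩ : ∃ N : ℕ, (((N : ℤ), 0) : Mon) ∈ M := by
    by_contra h
    push_neg at h
    have : {p : Mon | inS p ∧ p ∉ M}.Infinite := by
      apply Set.infinite_of_injective_forall_mem (f := fun n : ℕ => (((n : ℤ), 0) : Mon))
      · intro a b hab
        simpa using congrArg Prod.fst hab
      · intro n
        exact ⟨⟨by simp, le_refl _⟩, h n⟩
    exact this hM.2.2
  obtain ⟨j, hj, a1, a2⟩ := exists_gen hM hg hN
  have h0 : (m 0).2 ≤ (m j).2 := by
    have := beta_ge hg j 0 (by omega)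
    simp at this; omega
  have := beta_nonneg hM hg (le_refl 0 |>.trans (Nat.zero_le e))
  simp at a2
  omega

lemma beta_eq (hM : IsMonIdeal M) (hg : IsGenSeq M e m)
    (hTm : Tminus 1 1 M e m = ∅) : ∀ j ≤ e, (m j).2 = (j : ℤ) := by
  have hstep : ∀ i, i < e → (m (i + 1)).2 = (m i).2 + 1 := by
    intro i hi
    have hge := hg.2.1 i hi
    have hnt : ((i, (-1 : ℤ)) : ℕ × ℤ) ∉ Tminus 1 1 M e m := by rw [hTm]; exact Set.notMem_empty _
    have ha1 : 0 ≤ (m (i+1)).1 := alpha_nonneg hM hg hi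
    have has := alpha_step hM hg i hi
    have hwmem : rpow 1 1 (-1) (w m (i + 1)) ∈ M := by
      have hw : w m (i + 1) = (((m i).1, (m (i+1)).2) : Mon) := by
        unfold w
        simp only [Nat.add_sub_cancel]
        refine Prod.ext ?_ ?_ <;> simp <;> omega
      rw [hw]
      unfold rpow
      exact up hM (hg.1 (i+1) hi).1 (by simp; omega) (by simp)
    have hmmem : rpow 1 1 (-1) (m i) ∈ M := by
      by_contra hmem
      exact hnt ⟨hi, le_refl _, ⟨by simp [rpow]; omega, by
        simp [rpow]
        have := (hM.1 _ (hg.1 i (le_of_lt hi)).1).2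
        omega⟩, hmem, hwmem⟩
    obtain ⟨j, hj, b1, b2⟩ := exists_gen hM hg hmmem
    simp only [rpow] at b1 b2
    have hij : i + 1 ≤ j := by
      by_contra hc
      push_neg at hc
      have := alpha_gap hM hg (show j ≤ i by omega) (le_of_lt hi)
      simp at b1
      omega
    have := beta_ge hg (j - (i+1)) (i + 1) (by omega)
    rw [show i + 1 + (j - (i+1)) = j by omega] at this
    simp at b2
    omega
  intro j
  induction j with
  | zero => intro _; exact beta_zero hM hg
  | succ n ih =>
      intro h
      have := hstep n (by omega)
      have := ih (by omega)
      push_cast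
      omega

lemma mem_char (hM : IsMonIdeal M) (hg : IsGenSeq M e m)
    (hTm : Tminus 1 1 M e m = ∅) {u : ℤ} {n : ℕ} (hn : n ≤ e) :
    (((u, (n : ℤ)) : Mon) ∈ M) ↔ (m n).1 ≤ u := by
  constructor
  · intro h
    obtain ⟨j, hj, a1, a2⟩ := exists_gen hM hg h
    simp only at a1 a2
    rw [beta_eq hM hg hTm j hj] at a2
    have hjn : j ≤ n := by exact_mod_cast a2
    have := alpha_gap hM hg hjn hn
    omega
  · intro h
    exact up hM (hg.1 n hn).1 h (by rw [beta_eq hM hg hTm n hn])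

lemma jplus_eq (hM : IsMonIdeal M) (hg : IsGenSeq M e m)
    (hTm : Tminus 1 1 M e m = ∅) {u : ℤ} {n : ℕ} (hn : n ≤ e) (hu : (m n).1 ≤ u) :
    jplus e m ((u, (n : ℤ)) : Mon) = n := by
  unfold jplus
  rw [Nat.findGreatest_eq_iff]
  refine ⟨hn, fun _ => ⟨hu, by rw [beta_eq hM hg hTm n hn]⟩, ?_⟩
  intro j hj hje hP
  have := hP.2
  rw [beta_eq hM hg hTm j hje] at this
  simp at this
  omega

lemma w_eq (hM : IsMonIdeal M) (hg : IsGenSeq M e m)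
    (hTm : Tminus 1 1 M e m = ∅) {i : ℕ} (h1 : 1 ≤ i) (he : i ≤ e) :
    w m i = (((m (i-1)).1, (i : ℤ)) : Mon) := by
  have hlt : (m i).1 < (m (i-1)).1 := by
    have := alpha_step hM hg (i-1) (by omega)
    rwa [show i - 1 + 1 = i by omega] at this
  have hb1 := beta_eq hM hg hTm (i-1) (by omega)
  have hb2 := beta_eq hM hg hTm i he
  unfold w
  refine Prod.ext ?_ ?_ <;> simp <;> omega

lemma Tplus_char (hM : IsMonIdeal M) (hg : IsGenSeq M e m)
    (hTm : Tminus 1 1 M e m = ∅) {i : ℕ} {ℓ : ℤ} (hi1 : 1 ≤ i) (hie : i ≤ e) (hl : 1 ≤ ℓ) :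
    ((i, ℓ) : ℕ × ℤ) ∈ Tplus 1 1 M e m ↔
      ℓ ≤ (i : ℤ) ∧ (m i).1 + ℓ < (m (i - ℓ.toNat)).1 ∧
        (m (i - ℓ.toNat)).1 ≤ (m (i - 1)).1 + ℓ := by
  have hb := beta_eq hM hg hTm i hie
  have ha0 := alpha_nonneg hM hg hie
  constructor
  · rintro ⟨-, -, -, hS, hnm, hwm⟩
    simp only [rpow, inS, one_mul] at hS hnm hwm
    have hli : ℓ ≤ (i : ℤ) := by
      have := hS.2; omega
    have hcast : (m i).2 - ℓ = ((i - ℓ.toNat : ℕ) : ℤ) := by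
      rw [hb]; omega
    refine ⟨hli, ?_, ?_⟩
    · rw [hcast] at hnm
      have := (mem_char hM hg hTm (n := i - ℓ.toNat) (by omega)).not.mp hnm
      omega
    · rw [w_eq hM hg hTm hi1 hie] at hwm
      simp only at hwm
      have hcast2 : (i : ℤ) - ℓ = ((i - ℓ.toNat : ℕ) : ℤ) := by omega
      rw [hcast2] at hwm
      exact (mem_char hM hg hTm (n := i - ℓ.toNat) (by omega)).mp hwm
  · rintro ⟨hli, h1, h2⟩
    have hcast : (m i).2 - ℓ = ((i - ℓ.toNat : ℕ) : ℤ) := by rw [hb]; omega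
    refine ⟨hi1, hie, hl, ⟨by simp [rpow]; omega, by simp [rpow, hb]; omega⟩, ?_, ?_⟩
    · simp only [rpow, one_mul]
      rw [hcast]
      exact (mem_char hM hg hTm (by omega)).not.mpr (by omega)
    · rw [w_eq hM hg hTm hi1 hie]
      simp only [rpow, one_mul]
      have hcast2 : (i : ℤ) - ℓ = ((i - ℓ.toNat : ℕ) : ℤ) := by omega
      rw [hcast2]
      exact (mem_char hM hg hTm (by omega)).mpr h2

lemma jplus_w (hM : IsMonIdeal M) (hg : IsGenSeq M e m)
    (hTm : Tminus 1 1 M e m = ∅) {i : ℕ} {ℓ : ℤ}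
    (harr : ((i, ℓ) : ℕ × ℤ) ∈ Tplus 1 1 M e m) :
    jplus e m (rpow 1 1 ℓ (w m i)) = i - ℓ.toNat := by
  have hi1 : 1 ≤ i := harr.1
  have hie : i ≤ e := harr.2.1
  have hl : 1 ≤ ℓ := harr.2.2.1
  obtain ⟨hli, h1, h2⟩ := (Tplus_char hM hg hTm hi1 hie hl).mp harr
  rw [w_eq hM hg hTm hi1 hie]
  have hcast2 : (i : ℤ) - ℓ = ((i - ℓ.toNat : ℕ) : ℤ) := by omega
  simp only [rpow, one_mul]
  rw [hcast2]
  exact jplus_eq hM hg hTm (by omega) h2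

lemma zseq_exists (hM : IsMonIdeal M) (hg : IsGenSeq M e m)
    (hTm : Tminus 1 1 M e m = ∅) {lm : ℕ → ℤ} (hlm : IsLmax (Tplus 1 1 M e m) lm) :
    ∀ i : ℕ, ∃ Z, IsZSeq 1 1 e m lm i Z := by
  intro i
  induction i using Nat.strong_induction_on with
  | _ i ih =>
    rcases Nat.eq_zero_or_pos i with h0 | h1
    · exact ⟨[], h0 ▸ IsZSeq.zero⟩
    · by_cases hpos : 0 < lm i
      · have harr : ((i, lm i) : ℕ × ℤ) ∈ Tplus 1 1 M e m := by
          rcases Classical.em (∃ ℓ, ((i, ℓ) : ℕ × ℤ) ∈ Tplus 1 1 M e m) with hex | hne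
          · exact (hlm i).2.1 hex
          · exact absurd ((hlm i).2.2 hne) (by omega)
        have hj := jplus_w hM hg hTm harr
        have hlt : i - (lm i).toNat < i := by
          have := harr.2.2.1; omega
        obtain ⟨Z, hZ⟩ := ih _ hlt
        exact ⟨(i, lm i) :: Z, IsZSeq.step h1 hpos (by rw [hj]; exact hZ)⟩
      · obtain ⟨Z, hZ⟩ := ih (i - 1) (by omega)
        exact ⟨Z, IsZSeq.skip h1 (by omega) hZ⟩

lemma main_lemma (hM : IsMonIdeal M) (hg : IsGenSeq M e m)
    (hTm : Tminus 1 1 M e m = ∅) {lm : ℕ → ℤ} (hlm : IsLmax (Tplus 1 1 M e m) lm) :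
    ∀ k : ℕ, 1 ≤ k → k ≤ e → (m k).1 + 1 < (m (k - 1)).1 →
      ∀ ℓ : ℤ, 1 ≤ ℓ → ℓ ≤ (k : ℤ) →
        ∃ P, IsDirectPath 1 1 M e m lm k P ∧ llen P = ℓ := by
  intro k
  induction k using Nat.strong_induction_on with
  | _ k ih =>
    intro hk1 hke hc ℓ hl1 hlk
    have h1arr : ((k, (1 : ℤ)) : ℕ × ℤ) ∈ Tplus 1 1 M e m := by
      rw [Tplus_char hM hg hTm hk1 hke le_rfl]
      refine ⟨by exact_mod_cast hk1, ?_, ?_⟩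
      · simp only [Int.toNat_one]; exact hc
      · simp only [Int.toNat_one]; omega
    have hL1 : 1 ≤ lm k := (hlm k).1 1 h1arr
    have hLarr : ((k, lm k) : ℕ × ℤ) ∈ Tplus 1 1 M e m := (hlm k).2.1 ⟨1, h1arr⟩
    obtain ⟨hLk, hA, hB⟩ := (Tplus_char hM hg hTm hk1 hke hL1).mp hLarr
    have hlow : ∀ t : ℤ, 1 ≤ t → t ≤ (k : ℤ) →
        (m (k - 1)).1 + t - 1 ≤ (m (k - t.toNat)).1 := by
      intro t ht1 htk
      have := alpha_gap hM hg (n := k - t.toNat) (n' := k - 1) (by omega) (by omega)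
      omega
    have harr : ∀ t : ℤ, 1 ≤ t → t ≤ lm k → ((k, t) : ℕ × ℤ) ∈ Tplus 1 1 M e m := by
      intro t ht1 htL
      rw [Tplus_char hM hg hTm hk1 hke ht1]
      have htk : t ≤ (k : ℤ) := le_trans htL hLk
      refine ⟨htk, ?_, ?_⟩
      · have := hlow t ht1 htk; omega
      · have := alpha_gap hM hg (n := k - (lm k).toNat) (n' := k - t.toNat)
          (by omega) (by omega)
        omega
    have hj := jplus_w hM hg hTm hLarr
    obtain ⟨Z', hZ'⟩ := zseq_exists hM hg hTm hlm (k - (lm k).toNat)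
    have hZ : IsZSeq 1 1 e m lm k ((k, lm k) :: Z') :=
      IsZSeq.step hk1 (by omega) (by rw [hj]; exact hZ')
    by_cases hcase : ℓ ≤ lm k
    · rcases eq_or_lt_of_le hcase with heq | hlt
      · refine ⟨[(k, lm k)], ⟨⟨hLarr, le_rfl, trivial⟩,
          (k, lm k) :: Z', hZ, Or.inl ⟨1, one_pos, by simp, by simp⟩⟩, by simp [llen, heq]⟩
      · refine ⟨[(k, ℓ)], ⟨⟨harr ℓ hl1 hcase, le_rfl, trivial⟩,
          (k, lm k) :: Z', hZ, Or.inr ⟨0, (k, lm k), ℓ, by simp, hl1, hlt, by simp⟩⟩,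
          by simp [llen]⟩
    · push_neg at hcase
      set k' := k - (lm k).toNat with hk'
      have hk'1 : 1 ≤ k' := by omega
      have hnot : ((k, lm k + 1) : ℕ × ℤ) ∉ Tplus 1 1 M e m := by
        intro h
        have := (hlm k).1 _ h
        omega
      rw [Tplus_char hM hg hTm hk1 hke (by omega)] at hnot
      push_neg at hnot
      have hcond2 : (m k).1 + (lm k + 1) < (m (k - (lm k + 1).toNat)).1 := by
        have := hlow (lm k + 1) (by omega) (by omega)
        omega
      have hfail := hnot (by omega) hcond2
      have hc' : (m k').1 + 1 < (m (k' - 1)).1 := by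
        have hidx : k' - 1 = k - (lm k + 1).toNat := by omega
        rw [hidx]
        omega
      obtain ⟨P', ⟨hpath', Z'', hZ'', hstruct⟩, hlen'⟩ :=
        ih k' (by omega) hk'1 (by omega) hc' (ℓ - lm k) (by omega) (by omega)
      refine ⟨(k, lm k) :: P', ⟨⟨hLarr, le_rfl, by rw [hj]; exact hpath'⟩,
        (k, lm k) :: Z'', IsZSeq.step hk1 (by omega) (by rw [hj]; exact hZ''), ?_⟩, ?_⟩
      · rcases hstruct with ⟨s, hs0, hsle, hP'⟩ | ⟨s, z, ℓ', hget, ha, hb, hP'⟩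
        · exact Or.inl ⟨s + 1, by omega, by simp; omega, by simp [hP']⟩
        · exact Or.inr ⟨s + 1, z, ℓ', by simpa using hget, ha, hb, by simp [hP']⟩
      · simp only [llen, List.map_cons, List.sum_cons] at hlen' ⊢
        omega

end Aux


/-- Proposition `p:coeffsoffsubk`.  In the standard
grading (`a = b = 1`, `r = x/y`), let `M` be a monomial ideal of finite
colength with `T⁻(M) = ∅`.  Fix `k` with `m_k r ∈ S ∖ M`.  If
`0 < ℓ ≤ k` and `m_k r^ℓ ∈ S ∖ M`, then there is a direct path from
`m_k` of length `ℓ`. -/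
theorem directPath_exists_of_standard_lexLeast
    (M : Set Mon) (hM : IsMonIdeal M) (e : ℕ) (m : ℕ → Mon)
    (hg : IsGenSeq M e m) (hTm : Tminus 1 1 M e m = ∅)
    (lm : ℕ → ℤ) (hlm : IsLmax (Tplus 1 1 M e m) lm)
    (k : ℕ) (hk : k ≤ e)
    (hr : inS (rpow 1 1 1 (m k)) ∧ rpow 1 1 1 (m k) ∉ M)
    (ℓ : ℤ) (hℓ0 : 0 < ℓ) (hℓk : ℓ ≤ (k : ℤ))
    (hrl : inS (rpow 1 1 ℓ (m k)) ∧ rpow 1 1 ℓ (m k) ∉ M) :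
    ∃ P : List (ℕ × ℤ), IsDirectPath 1 1 M e m lm k P ∧ llen P = ℓ := by
  have hk1 : 1 ≤ k := by omega
  have hb := beta_eq hM hg hTm k hk
  have hc : (m k).1 + 1 < (m (k - 1)).1 := by
    have hnm := hr.2
    simp only [rpow, one_mul] at hnm
    have hcast : (m k).2 - 1 = ((k - 1 : ℕ) : ℤ) := by omega
    rw [hcast] at hnm
    have := (mem_char hM hg hTm (n := k - 1) (by omega)).not.mp hnm
    omega
  exact main_lemma hM hg hTm hlm k hk1 hk hc ℓ (by omega) hℓk
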